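/- arXiv:2107.01176 — 5 statements merged into one kernel-verified Lean document; each statement's English description precedes it below -/
import Mathlib

section
/- Let J : ℝⁿ → ℝ be twice continuously differentiable with Hessian bounds Ḣ ⪯ ∇²J ⪯ H̄, and set Ĥ := (H̄+Ḣ)/2 and H̃ := H̄ − Ḣ. Then for all r, y, v ∈ ℝⁿ: |⟨v, ∇J(y) − ∇J(r)⟩ − vᵀĤ(y−r)| ≤ ½ ‖v‖_H̃ · ‖y−r‖_H̃. -/
open Matrix
open scoped RealInnerProductSpace

lemma aux_opt {a b x : ℝ} (ha : 0 ≤ a) (hb : 0 ≤ b)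
    (h : ∀ t : ℝ, 0 < t → 4 * |x| ≤ t * a + b / t) :
    |x| ≤ Real.sqrt a * Real.sqrt b / 2 := by
  rcases eq_or_lt_of_le (abs_nonneg x) with hx | hx
  · rw [← hx]
    positivity
  rcases eq_or_lt_of_le ha with ha0 | ha0
  · exfalso
    have ht : (0:ℝ) < (b + 1) / (4 * |x|) := by positivity
    have := h _ ht
    rw [← ha0, mul_zero, zero_add, div_div_eq_mul_div,
      le_div_iff₀ (by positivity : (0:ℝ) < b + 1)] at this
    nlinarith
  rcases eq_or_lt_of_le hb with hb0 | hb0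
  · exfalso
    have ht : (0:ℝ) < 2 * |x| / a := by positivity
    have := h _ ht
    rw [← hb0, zero_div, add_zero, div_mul_cancel₀ _ (ne_of_gt ha0)] at this
    linarith
  have ht : (0:ℝ) < Real.sqrt b / Real.sqrt a := by positivity
  have := h _ ht
  have hsa : Real.sqrt a * Real.sqrt a = a := Real.mul_self_sqrt ha
  have hsb : Real.sqrt b * Real.sqrt b = b := Real.mul_self_sqrt hb
  have hsa0 : 0 < Real.sqrt a := Real.sqrt_pos.mpr ha0
  have hsb0 : 0 < Real.sqrt b := Real.sqrt_pos.mpr hb0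
  have h1 : Real.sqrt b / Real.sqrt a * a = Real.sqrt b * Real.sqrt a := by
    field_simp
    nlinarith
  have h2 : b / (Real.sqrt b / Real.sqrt a) = Real.sqrt b * Real.sqrt a := by
    rw [div_div_eq_mul_div]
    field_simp
    nlinarith
  rw [h1, h2] at this
  nlinarith

lemma bilin_abs_le {E : Type*} [AddCommGroup E] [Module ℝ E]
    (B Q : E →ₗ[ℝ] E →ₗ[ℝ] ℝ) (hB : ∀ a c, B a c = B c a) (hQ : ∀ a c, Q a c = Q c a)
    (hQ0 : ∀ u, 0 ≤ Q u u) (hbd : ∀ u, |B u u| ≤ Q u u / 2) (v w : E) :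
    |B v w| ≤ Real.sqrt (Q v v) * Real.sqrt (Q w w) / 2 := by
  apply aux_opt (hQ0 v) (hQ0 w)
  intro t ht
  have h1 := hbd (t • v + w)
  have h2 := hbd (t • v - w)
  simp only [map_add, map_sub, _root_.map_smul, smul_eq_mul, LinearMap.add_apply,
    LinearMap.sub_apply, LinearMap.smul_apply] at h1 h2
  rw [abs_le] at h1 h2
  have hBvw := hB w v
  have hQvw := hQ w v
  have key : 4 * |B v w| * t ≤ t * (Q v v) * t + Q w w := by
    rcases abs_cases (B v w) with ⟨he, _⟩ | ⟨he, _⟩ <;> rw [he] <;> nlinarith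
  calc 4 * |B v w| = 4 * |B v w| * t / t := by field_simp
    _ ≤ (t * Q v v * t + Q w w) / t := by gcongr
    _ = t * Q v v + Q w w / t := by field_simp

/-- The bilinear form of a matrix on `EuclideanSpace`. -/
noncomputable def matForm {n : ℕ} (M : Matrix (Fin n) (Fin n) ℝ) :
    EuclideanSpace ℝ (Fin n) →ₗ[ℝ] EuclideanSpace ℝ (Fin n) →ₗ[ℝ] ℝ :=
  LinearMap.mk₂ ℝ (fun a c => a ⬝ᵥ M.mulVec c)
    (fun a b c => by
      show ((a : Fin n → ℝ) + (b : Fin n → ℝ)) ⬝ᵥ M.mulVec c = _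
      rw [add_dotProduct])
    (fun s a c => by
      show (s • (a : Fin n → ℝ)) ⬝ᵥ M.mulVec c = _
      rw [smul_dotProduct])
    (fun a c d => by
      show (a : Fin n → ℝ) ⬝ᵥ M.mulVec ((c : Fin n → ℝ) + (d : Fin n → ℝ)) = _
      rw [Matrix.mulVec_add, dotProduct_add])
    (fun s a c => by
      show (a : Fin n → ℝ) ⬝ᵥ M.mulVec (s • (c : Fin n → ℝ)) = _
      rw [Matrix.mulVec_smul, dotProduct_smul])

@[simp] lemma matForm_apply {n : ℕ} (M : Matrix (Fin n) (Fin n) ℝ)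
    (a c : EuclideanSpace ℝ (Fin n)) : matForm M a c = a ⬝ᵥ M.mulVec c := rfl

/-- The bilinear form of a continuous bilinear map. -/
noncomputable def clmForm {E : Type*} [NormedAddCommGroup E] [NormedSpace ℝ E]
    (f : E →L[ℝ] E →L[ℝ] ℝ) : E →ₗ[ℝ] E →ₗ[ℝ] ℝ :=
  LinearMap.mk₂ ℝ (fun a c => f a c)
    (fun a b c => by simp)
    (fun s a c => by simp)
    (fun a c d => by simp)
    (fun s a c => by simp)

@[simp] lemma clmForm_apply {E : Type*} [NormedAddCommGroup E] [NormedSpace ℝ E]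
    (f : E →L[ℝ] E →L[ℝ] ℝ) (a c : E) : clmForm f a c = f a c := rfl

lemma dot_symm {n : ℕ} {M : Matrix (Fin n) (Fin n) ℝ} (hM : M.IsSymm)
    (a c : EuclideanSpace ℝ (Fin n)) : a ⬝ᵥ M.mulVec c = c ⬝ᵥ M.mulVec a := by
  rw [Matrix.dotProduct_mulVec, ← Matrix.mulVec_transpose, hM.eq, dotProduct_comm]

/-- With Hessian bounds `Ḣ ⪯ ∇²J ⪯ H̄`, `Ĥ := (H̄+Ḣ)/2`, `H̃ := H̄−Ḣ`,
for all `r, y, v`: `|⟨v, ∇J(y) − ∇J(r)⟩ − vᵀĤ(y−r)| ≤ ½‖v‖_H̃ · ‖y−r‖_H̃`. -/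
theorem stmt_1 {n : ℕ} (J : EuclideanSpace ℝ (Fin n) → ℝ)
    (Hlo Hhi : Matrix (Fin n) (Fin n) ℝ)
    (hHlo : Hlo.IsSymm) (hHhi : Hhi.IsSymm)
    (hJ : ContDiff ℝ 2 J)
    (hlow : ∀ z v : EuclideanSpace ℝ (Fin n),
      v ⬝ᵥ Hlo.mulVec v ≤ iteratedFDeriv ℝ 2 J z ![v, v])
    (hhigh : ∀ z v : EuclideanSpace ℝ (Fin n),
      iteratedFDeriv ℝ 2 J z ![v, v] ≤ v ⬝ᵥ Hhi.mulVec v)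
    (r y v : EuclideanSpace ℝ (Fin n)) :
    |⟪v, gradient J y - gradient J r⟫
        - v ⬝ᵥ (((2 : ℝ)⁻¹ • (Hhi + Hlo)).mulVec (y - r))|
      ≤ (1 / 2) * Real.sqrt (v ⬝ᵥ (Hhi - Hlo).mulVec v)
          * Real.sqrt ((y - r) ⬝ᵥ (Hhi - Hlo).mulVec (y - r)) := by
  classical
  set Md : Matrix (Fin n) (Fin n) ℝ := (2 : ℝ)⁻¹ • (Hhi + Hlo) with hMddef
  set Mt : Matrix (Fin n) (Fin n) ℝ := Hhi - Hlo with hMtdef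
  have hMdsymm : Md.IsSymm := (hHhi.add hHlo).smul _
  have hMtsymm : Mt.IsSymm := hHhi.sub hHlo
  set f2 : EuclideanSpace ℝ (Fin n) → (EuclideanSpace ℝ (Fin n) →L[ℝ]
      EuclideanSpace ℝ (Fin n) →L[ℝ] ℝ) := fun z => fderiv ℝ (fderiv ℝ J) z with hf2def
  have eMd : ∀ u u' : EuclideanSpace ℝ (Fin n), u ⬝ᵥ Md.mulVec u' =
      ((u ⬝ᵥ Hhi.mulVec u') + (u ⬝ᵥ Hlo.mulVec u')) / 2 := by
    intro u u'
    rw [hMddef, Matrix.smul_mulVec, dotProduct_smul, Matrix.add_mulVec, dotProduct_add]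
    simp [smul_eq_mul]
    ring
  have eMt : ∀ u u' : EuclideanSpace ℝ (Fin n), u ⬝ᵥ Mt.mulVec u' =
      (u ⬝ᵥ Hhi.mulVec u') - (u ⬝ᵥ Hlo.mulVec u') := by
    intro u u'
    rw [hMtdef, Matrix.sub_mulVec, dotProduct_sub]
  have hQ0 : ∀ u : EuclideanSpace ℝ (Fin n), 0 ≤ u ⬝ᵥ Mt.mulVec u := by
    intro u
    have h1 := hlow 0 u
    have h2 := hhigh 0 u
    rw [eMt]
    linarith
  have hsymm2 : ∀ z a c : EuclideanSpace ℝ (Fin n), f2 z a c = f2 z c a := by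
    intro z a c
    simp only [hf2def]
    exact (hJ.contDiffAt.isSymmSndFDerivAt (by norm_num)).eq a c
  have hdiag : ∀ (z u : EuclideanSpace ℝ (Fin n)),
      |f2 z u u - u ⬝ᵥ Md.mulVec u| ≤ (u ⬝ᵥ Mt.mulVec u) / 2 := by
    intro z u
    have hit : iteratedFDeriv ℝ 2 J z ![u, u] = f2 z u u := by
      simp only [hf2def]
      rw [iteratedFDeriv_two_apply]
      rfl
    have h1 := hlow z u
    have h2 := hhigh z u
    rw [hit] at h1 h2
    rw [abs_le, eMd, eMt]
    constructor <;> linarith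
  have key : ∀ (z a c : EuclideanSpace ℝ (Fin n)), |f2 z a c - a ⬝ᵥ Md.mulVec c| ≤
      Real.sqrt (a ⬝ᵥ Mt.mulVec a) * Real.sqrt (c ⬝ᵥ Mt.mulVec c) / 2 := by
    intro z a c
    have := bilin_abs_le (clmForm (f2 z) - matForm Md) (matForm Mt)
      (fun a c => by
        simp only [LinearMap.sub_apply, clmForm_apply, matForm_apply]
        rw [hsymm2 z a c, dot_symm hMdsymm a c])
      (fun a c => by
        simp only [matForm_apply]
        exact dot_symm hMtsymm a c)
      (fun u => by simpa only [matForm_apply] using hQ0 u)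
      (fun u => by
        simpa only [LinearMap.sub_apply, clmForm_apply, matForm_apply] using hdiag z u) a c
    simpa only [LinearMap.sub_apply, clmForm_apply, matForm_apply] using this
  set w : EuclideanSpace ℝ (Fin n) := y - r with hwdef
  set c : ℝ → EuclideanSpace ℝ (Fin n) := fun t => r + t • w with hcdef
  set K : ℝ := v ⬝ᵥ Md.mulVec w with hKdef
  set h : ℝ → ℝ := fun t => fderiv ℝ J (c t) v - t * K with hhdef
  have hC1 : ContDiff ℝ 1 (fderiv ℝ J) := hJ.fderiv_right (by norm_num)
  have hderiv : ∀ t : ℝ, HasDerivAt h (f2 (c t) w v - K) t := by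
    intro t
    have hc : HasDerivAt c w t := by
      have := ((hasDerivAt_id t).smul_const w).const_add r
      simpa [hcdef] using this
    have hF : HasFDerivAt (fderiv ℝ J) (f2 (c t)) (c t) :=
      (hC1.differentiable one_ne_zero (c t)).hasFDerivAt
    have h1 : HasDerivAt (fun t => fderiv ℝ J (c t)) (f2 (c t) w) t :=
      hF.comp_hasDerivAt t hc
    have h2 : HasDerivAt (fun t => fderiv ℝ J (c t) v) (f2 (c t) w v) t := by
      have := h1.clm_apply (hasDerivAt_const t v)
      simpa using this
    rw [hhdef]
    exact h2.sub (hasDerivAt_mul_const K)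
  set C : ℝ := Real.sqrt (w ⬝ᵥ Mt.mulVec w) * Real.sqrt (v ⬝ᵥ Mt.mulVec v) / 2 with hCdef
  have hbound : ∀ t ∈ Set.Icc (0:ℝ) 1, ‖f2 (c t) w v - K‖ ≤ C := by
    intro t _
    rw [Real.norm_eq_abs, hKdef, dot_symm hMdsymm v w]
    exact key (c t) w v
  have hmvt := Convex.norm_image_sub_le_of_norm_hasDerivWithin_le
    (f := h) (f' := fun t => f2 (c t) w v - K)
    (fun t _ => (hderiv t).hasDerivWithinAt) hbound (convex_Icc 0 1)
    (Set.left_mem_Icc.mpr zero_le_one) (Set.right_mem_Icc.mpr zero_le_one)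
  have hc1 : c 1 = y := by
    rw [hcdef]
    simp [hwdef]
  have hc0 : c 0 = r := by
    rw [hcdef]
    simp
  have hgrad : ∀ p : EuclideanSpace ℝ (Fin n), ⟪v, gradient J p⟫ = fderiv ℝ J p v := by
    intro p
    rw [real_inner_comm]
    exact InnerProductSpace.toDual_symm_apply
  have hval : h 1 - h 0 = ⟪v, gradient J y - gradient J r⟫ - K := by
    rw [hhdef]
    simp only [hc1, hc0, one_mul, zero_mul, sub_zero]
    rw [inner_sub_right, hgrad y, hgrad r]
    ring
  rw [Real.norm_eq_abs, hval] at hmvt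
  have hone : ‖(1:ℝ) - 0‖ = 1 := by norm_num
  rw [hone, mul_one] at hmvt
  calc |⟪v, gradient J y - gradient J r⟫ - v ⬝ᵥ Md.mulVec (y - r)|
      = |⟪v, gradient J y - gradient J r⟫ - K| := by rw [hKdef, hwdef, WithLp.ofLp_sub]
    _ ≤ C := hmvt
    _ = 1 / 2 * Real.sqrt (v ⬝ᵥ Mt.mulVec v) * Real.sqrt ((y - r) ⬝ᵥ Mt.mulVec (y - r)) := by
        rw [hCdef, hwdef, WithLp.ofLp_sub]
        ring
end

section
/- Let Ḣ ⪯ H̄ be real symmetric n×n matrices, Ĥ := (H̄+Ḣ)/2 and H̃ := H̄ − Ḣ. Then for every real symmetric n×n matrix H with Ḣ ⪯ H ⪯ H̄ and all vectors a, b ∈ ℝⁿ: |aᵀHb − aᵀĤb| ≤ ½ ‖a‖_H̃ · ‖b‖_H̃. -/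
open Matrix

lemma aux_polar {n : ℕ} {D S : Matrix (Fin n) (Fin n) ℝ} (hD : D.IsSymm)
    (h1 : (S - D).PosSemidef) (h2 : (S + D).PosSemidef) (a b : Fin n → ℝ) :
    a ⬝ᵥ D.mulVec b ≤ (a ⬝ᵥ S.mulVec a + b ⬝ᵥ S.mulVec b) / 2 := by
  have hba : b ⬝ᵥ D.mulVec a = a ⬝ᵥ D.mulVec b := by
    rw [Matrix.dotProduct_mulVec, ← Matrix.mulVec_transpose, hD.eq, dotProduct_comm]
  have e1 : (0:ℝ) ≤ (a + b) ⬝ᵥ (S - D).mulVec (a + b) := by simpa using h1.dotProduct_mulVec_nonneg (a + b)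
  have e2 : (0:ℝ) ≤ (a - b) ⬝ᵥ (S + D).mulVec (a - b) := by simpa using h2.dotProduct_mulVec_nonneg (a - b)
  simp only [Matrix.sub_mulVec, Matrix.add_mulVec, Matrix.mulVec_sub, Matrix.mulVec_add,
    dotProduct_sub, dotProduct_add, sub_dotProduct, add_dotProduct] at e1 e2
  linarith [hba]

lemma aux_num (x α β : ℝ) (hα : 0 ≤ α) (hβ : 0 ≤ β)
    (h : ∀ t : ℝ, 0 < t → x ≤ (t^2*α + (t⁻¹)^2*β)/2) :
    x ≤ Real.sqrt α * Real.sqrt β := by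
  refine le_of_forall_pos_le_add ?_
  intro ε hε
  set A := Real.sqrt α with hAdef
  set B := Real.sqrt β with hBdef
  have hA : 0 ≤ A := Real.sqrt_nonneg _
  have hB : 0 ≤ B := Real.sqrt_nonneg _
  have hA2 : A^2 = α := Real.sq_sqrt hα
  have hB2 : B^2 = β := Real.sq_sqrt hβ
  set δ := ε/(A+B+1) with hδ
  have hδpos : 0 < δ := div_pos hε (by positivity)
  set s := (B+δ)/(A+δ) with hs_def
  have hs : 0 < s := div_pos (by linarith) (by linarith)
  have ht := h (Real.sqrt s) (Real.sqrt_pos.2 hs)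
  have hts : (Real.sqrt s)^2 = s := Real.sq_sqrt hs.le
  have htinv : ((Real.sqrt s)⁻¹)^2 = s⁻¹ := by rw [inv_pow, hts]
  rw [hts, htinv] at ht
  have key1 : s*α ≤ A*(B+δ) := by
    rw [hs_def, div_mul_eq_mul_div, div_le_iff₀ (by linarith)]
    nlinarith [mul_nonneg (mul_nonneg hA (by linarith : (0:ℝ) ≤ B+δ)) hδpos.le]
  have key2 : s⁻¹*β ≤ B*(A+δ) := by
    have hinv : s⁻¹ = (A+δ)/(B+δ) := by rw [hs_def, inv_div]
    rw [hinv, div_mul_eq_mul_div, div_le_iff₀ (by linarith)]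
    nlinarith [mul_nonneg (mul_nonneg hB (by linarith : (0:ℝ) ≤ A+δ)) hδpos.le]
  have hfin : δ*(A+B) ≤ ε := by
    rw [hδ, div_mul_eq_mul_div, div_le_iff₀ (by positivity)]
    nlinarith
  linarith

lemma aux_one {n : ℕ} {D T : Matrix (Fin n) (Fin n) ℝ} (hD : D.IsSymm)
    (h1 : ((2:ℝ)⁻¹ • T - D).PosSemidef) (h2 : ((2:ℝ)⁻¹ • T + D).PosSemidef)
    (a b : Fin n → ℝ) :
    a ⬝ᵥ D.mulVec b ≤ (1/2) * Real.sqrt (a ⬝ᵥ T.mulVec a) * Real.sqrt (b ⬝ᵥ T.mulVec b) := by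
  have hq : ∀ x : Fin n → ℝ, 0 ≤ x ⬝ᵥ T.mulVec x := by
    intro x
    have e1 : (0:ℝ) ≤ x ⬝ᵥ ((2:ℝ)⁻¹ • T - D).mulVec x := by simpa using h1.dotProduct_mulVec_nonneg x
    have e2 : (0:ℝ) ≤ x ⬝ᵥ ((2:ℝ)⁻¹ • T + D).mulVec x := by simpa using h2.dotProduct_mulVec_nonneg x
    simp only [Matrix.sub_mulVec, Matrix.add_mulVec, Matrix.smul_mulVec,
      dotProduct_sub, dotProduct_add, dotProduct_smul, smul_eq_mul] at e1 e2
    linarith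
  have key : ∀ t : ℝ, 0 < t →
      2 * (a ⬝ᵥ D.mulVec b) ≤ (t^2 * (a ⬝ᵥ T.mulVec a) + (t⁻¹)^2 * (b ⬝ᵥ T.mulVec b))/2 := by
    intro t ht
    have htne : t ≠ 0 := ht.ne'
    have this := aux_polar hD h1 h2 (t • a) (t⁻¹ • b)
    have lhs_eq : (t • a) ⬝ᵥ D.mulVec (t⁻¹ • b) = a ⬝ᵥ D.mulVec b := by
      simp only [smul_dotProduct, Matrix.mulVec_smul, dotProduct_smul, smul_eq_mul]
      rw [← mul_assoc, inv_mul_cancel₀ htne, one_mul]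
    have q1 : (t • a) ⬝ᵥ ((2:ℝ)⁻¹ • T).mulVec (t • a)
        = 2⁻¹ * (t^2 * (a ⬝ᵥ T.mulVec a)) := by
      simp only [smul_dotProduct, Matrix.mulVec_smul, dotProduct_smul,
        Matrix.smul_mulVec, smul_eq_mul]
      ring
    have q2 : (t⁻¹ • b) ⬝ᵥ ((2:ℝ)⁻¹ • T).mulVec (t⁻¹ • b)
        = 2⁻¹ * ((t⁻¹)^2 * (b ⬝ᵥ T.mulVec b)) := by
      simp only [smul_dotProduct, Matrix.mulVec_smul, dotProduct_smul,
        Matrix.smul_mulVec, smul_eq_mul]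
      ring
    rw [lhs_eq, q1, q2] at this
    linarith
  have := aux_num (2 * (a ⬝ᵥ D.mulVec b)) _ _ (hq a) (hq b) key
  linarith

/-- For symmetric `Ḣ ⪯ H̄`, `Ĥ := (H̄+Ḣ)/2`, `H̃ := H̄−Ḣ`, every symmetric `H`
with `Ḣ ⪯ H ⪯ H̄` and all `a, b ∈ ℝⁿ` satisfy `|aᵀHb − aᵀĤb| ≤ ½‖a‖_H̃‖b‖_H̃`. -/
theorem stmt_4 {n : ℕ} (Hlo Hhi H : Matrix (Fin n) (Fin n) ℝ)
    (hHlo : Hlo.IsSymm) (hHhi : Hhi.IsSymm) (hH : H.IsSymm)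
    (hle : (Hhi - Hlo).PosSemidef)
    (h1 : (H - Hlo).PosSemidef) (h2 : (Hhi - H).PosSemidef)
    (a b : Fin n → ℝ) :
    |a ⬝ᵥ H.mulVec b - a ⬝ᵥ (((2 : ℝ)⁻¹ • (Hhi + Hlo)).mulVec b)|
      ≤ (1 / 2) * Real.sqrt (a ⬝ᵥ (Hhi - Hlo).mulVec a)
          * Real.sqrt (b ⬝ᵥ (Hhi - Hlo).mulVec b) := by
  set D := H - (2:ℝ)⁻¹ • (Hhi + Hlo) with hDdef
  set T := Hhi - Hlo with hTdef
  have hD : D.IsSymm := by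
    simp only [Matrix.IsSymm, hDdef, Matrix.transpose_sub, Matrix.transpose_smul,
      Matrix.transpose_add, hH.eq, hHhi.eq, hHlo.eq]
  have e1 : (2:ℝ)⁻¹ • T - D = Hhi - H := by
    rw [hDdef, hTdef]; module
  have e2 : (2:ℝ)⁻¹ • T + D = H - Hlo := by
    rw [hDdef, hTdef]; module
  have hp1 : ((2:ℝ)⁻¹ • T - D).PosSemidef := e1 ▸ h2
  have hp2 : ((2:ℝ)⁻¹ • T + D).PosSemidef := e2 ▸ h1
  have hx : a ⬝ᵥ H.mulVec b - a ⬝ᵥ (((2 : ℝ)⁻¹ • (Hhi + Hlo)).mulVec b)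
      = a ⬝ᵥ D.mulVec b := by
    simp [hDdef, Matrix.sub_mulVec]
  rw [hx, abs_le]
  constructor
  · have := aux_one hD hp1 hp2 a (-b)
    simp only [Matrix.mulVec_neg, dotProduct_neg, neg_dotProduct, neg_neg] at this
    linarith
  · exact aux_one hD hp1 hp2 a b
end

section
/- Let Ḣ ⪯ H̄ be real symmetric n×n matrices, Ĥ := (H̄+Ḣ)/2 and H̃ := H̄ − Ḣ, and let a, b ∈ ℝⁿ. Then the set { aᵀHb : H real symmetric, Ḣ ⪯ H ⪯ H̄ } has least element aᵀĤb − ½‖a‖_H̃‖b‖_H̃ and greatest element aᵀĤb + ½‖a‖_H̃‖b‖_H̃ (both values are attained by matrices in the interval). -/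
open Matrix

section SqrtCompat

open scoped MatrixOrder

noncomputable def Matrix.PosSemidef.sqrt {n : ℕ} {M : Matrix (Fin n) (Fin n) ℝ}
    (_h : M.PosSemidef) : Matrix (Fin n) (Fin n) ℝ :=
  CFC.sqrt M

theorem Matrix.PosSemidef.posSemidef_sqrt {n : ℕ} {M : Matrix (Fin n) (Fin n) ℝ}
    (h : M.PosSemidef) : h.sqrt.PosSemidef :=
  Matrix.nonneg_iff_posSemidef.mp (CFC.sqrt_nonneg M)

theorem Matrix.PosSemidef.sqrt_mul_self {n : ℕ} {M : Matrix (Fin n) (Fin n) ℝ}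
    (h : M.PosSemidef) : h.sqrt * h.sqrt = M :=
  CFC.sqrt_mul_sqrt_self M (Matrix.nonneg_iff_posSemidef.mpr h)

end SqrtCompat

namespace Stmt5Aux

variable {n : ℕ}

lemma herm_of_symm {M : Matrix (Fin n) (Fin n) ℝ} (h : M.IsSymm) : M.IsHermitian := by
  simpa [Matrix.IsHermitian, Matrix.IsSymm] using h

lemma symm_of_herm {M : Matrix (Fin n) (Fin n) ℝ} (h : M.IsHermitian) : M.IsSymm := by
  simpa [Matrix.IsHermitian, Matrix.IsSymm] using h

lemma psd_def {M : Matrix (Fin n) (Fin n) ℝ} (h1 : M.IsSymm)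
    (h2 : ∀ x, 0 ≤ x ⬝ᵥ M *ᵥ x) : M.PosSemidef :=
  Matrix.PosSemidef.of_dotProduct_mulVec_nonneg (herm_of_symm h1) fun x => by simpa using h2 x

lemma psd_quad {M : Matrix (Fin n) (Fin n) ℝ} (h : M.PosSemidef) (x : Fin n → ℝ) :
    0 ≤ x ⬝ᵥ M *ᵥ x := by simpa using h.dotProduct_mulVec_nonneg x

lemma dot_self_nonneg (u : Fin n → ℝ) : 0 ≤ u ⬝ᵥ u :=
  Finset.sum_nonneg fun i _ => mul_self_nonneg _

lemma dot_cs (u v : Fin n → ℝ) : (u ⬝ᵥ v) ^ 2 ≤ (u ⬝ᵥ u) * (v ⬝ᵥ v) := by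
  simpa [dotProduct, pow_two] using Finset.sum_mul_sq_le_sq_mul_sq Finset.univ u v

lemma dot_R {R : Matrix (Fin n) (Fin n) ℝ} (hR : R.IsSymm) (x y : Fin n → ℝ) :
    x ⬝ᵥ R *ᵥ y = (R *ᵥ x) ⬝ᵥ y := by
  have h1 : x ᵥ* R = R *ᵥ x := by
    rw [← hR, Matrix.vecMul_transpose, hR]
  rw [Matrix.dotProduct_mulVec, h1]

lemma dot_RR {R : Matrix (Fin n) (Fin n) ℝ} (hR : R.IsSymm) (x y : Fin n → ℝ) :
    x ⬝ᵥ (R * R) *ᵥ y = (R *ᵥ x) ⬝ᵥ (R *ᵥ y) := by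
  rw [← Matrix.mulVec_mulVec, dot_R hR]

lemma dot_conj {R P : Matrix (Fin n) (Fin n) ℝ} (hR : R.IsSymm) (x y : Fin n → ℝ) :
    x ⬝ᵥ (R * P * R) *ᵥ y = (R *ᵥ x) ⬝ᵥ P *ᵥ (R *ᵥ y) := by
  rw [← Matrix.mulVec_mulVec, ← Matrix.mulVec_mulVec, dot_R hR]

lemma psd_cs {M : Matrix (Fin n) (Fin n) ℝ} (h : M.PosSemidef) (x y : Fin n → ℝ) :
    (x ⬝ᵥ M *ᵥ y) ^ 2 ≤ (x ⬝ᵥ M *ᵥ x) * (y ⬝ᵥ M *ᵥ y) := by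
  classical
  have hR := symm_of_herm h.posSemidef_sqrt.1
  have hm : h.sqrt * h.sqrt = M := h.sqrt_mul_self
  rw [← hm, dot_RR hR, dot_RR hR, dot_RR hR]
  exact dot_cs _ _

lemma sqrt_cs {p q p' q' : ℝ} (hp : 0 ≤ p) (hq : 0 ≤ q) (hp' : 0 ≤ p') (hq' : 0 ≤ q') :
    Real.sqrt q * Real.sqrt q' + Real.sqrt p * Real.sqrt p' ≤
      Real.sqrt (p + q) * Real.sqrt (p' + q') := by
  have e1 := Real.sq_sqrt hp
  have e2 := Real.sq_sqrt hq
  have e3 := Real.sq_sqrt hp'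
  have e4 := Real.sq_sqrt hq'
  have key : (Real.sqrt q * Real.sqrt q' + Real.sqrt p * Real.sqrt p') ^ 2 ≤
      (p + q) * (p' + q') := by
    nlinarith [sq_nonneg (Real.sqrt p * Real.sqrt q' - Real.sqrt q * Real.sqrt p'),
      Real.sqrt_nonneg p, Real.sqrt_nonneg q, Real.sqrt_nonneg p', Real.sqrt_nonneg q',
      mul_nonneg (Real.sqrt_nonneg p) (Real.sqrt_nonneg p'),
      mul_nonneg (Real.sqrt_nonneg q) (Real.sqrt_nonneg q')]
  have h2 : Real.sqrt q * Real.sqrt q' + Real.sqrt p * Real.sqrt p' ≤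
      Real.sqrt ((p + q) * (p' + q')) :=
    (Real.le_sqrt (by positivity) (by positivity)).mpr key
  rwa [Real.sqrt_mul (by positivity)] at h2

lemma vecMulVec_mulVec' (w v x : Fin n → ℝ) : (vecMulVec w v) *ᵥ x = (v ⬝ᵥ x) • w := by
  ext i
  simp [vecMulVec, Matrix.mulVec, dotProduct, Finset.mul_sum, mul_assoc, mul_comm,
    mul_left_comm]

lemma mem_w (Hlo Hhi : Matrix (Fin n) (Fin n) ℝ) (hHlo : Hlo.IsSymm)
    (hle : (Hhi - Hlo).PosSemidef) (a b w : Fin n → ℝ) (hw : w ⬝ᵥ w = 1) :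
    ∃ H : Matrix (Fin n) (Fin n) ℝ, H.IsSymm ∧ (H - Hlo).PosSemidef ∧
      (Hhi - H).PosSemidef ∧
      a ⬝ᵥ H *ᵥ b = a ⬝ᵥ Hlo *ᵥ b +
        ((hle.sqrt *ᵥ a) ⬝ᵥ w) * (w ⬝ᵥ (hle.sqrt *ᵥ b)) := by
  classical
  set R := hle.sqrt with hRdef
  have hRherm : R.IsHermitian := hle.posSemidef_sqrt.1
  have hRs : R.IsSymm := symm_of_herm hRherm
  have hRR : R * R = Hhi - Hlo := hle.sqrt_mul_self
  set N : Matrix (Fin n) (Fin n) ℝ := vecMulVec w w with hNdef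
  have hNs : N.IsSymm := by
    ext i j
    simp [hNdef, vecMulVec, Matrix.IsSymm, mul_comm, Matrix.transpose_apply]
  have hNpsd : N.PosSemidef := by
    refine psd_def hNs fun x => ?_
    rw [hNdef, vecMulVec_mulVec', dotProduct_smul]
    have : x ⬝ᵥ w = w ⬝ᵥ x := dotProduct_comm _ _
    simp only [smul_eq_mul, this]
    exact mul_self_nonneg _
  have hN1psd : (1 - N).PosSemidef := by
    refine psd_def ?_ fun x => ?_
    · simp [Matrix.IsSymm, Matrix.transpose_sub, hNs.eq]
    · rw [Matrix.sub_mulVec, dotProduct_sub, Matrix.one_mulVec, hNdef, vecMulVec_mulVec',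
        dotProduct_smul]
      have hcs := dot_cs w x
      have hc : x ⬝ᵥ w = w ⬝ᵥ x := dotProduct_comm _ _
      simp only [smul_eq_mul, hc]
      nlinarith [dot_self_nonneg x]
  refine ⟨Hlo + R * N * R, ?_, ?_, ?_, ?_⟩
  · have h1 : (R * N * R).IsSymm := by
      simp [Matrix.IsSymm, Matrix.transpose_mul, hRs.eq, hNs.eq, Matrix.mul_assoc]
    simpa [Matrix.IsSymm, Matrix.transpose_add, hHlo.eq] using
      congrArg (fun M => Hlo + M) h1.eq
  · have h := hNpsd.mul_mul_conjTranspose_same R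
    rw [hRherm.eq] at h
    simpa [add_sub_cancel_left] using h
  · have key : Hhi - (Hlo + R * N * R) = R * (1 - N) * R := by
      rw [Matrix.mul_sub, Matrix.mul_one, Matrix.sub_mul, hRR]
      abel
    rw [key]
    have h := hN1psd.mul_mul_conjTranspose_same R
    rwa [hRherm.eq] at h
  · rw [Matrix.add_mulVec, dotProduct_add]
    congr 1
    rw [dot_conj hRs, hNdef, vecMulVec_mulVec', dotProduct_smul]
    simp only [smul_eq_mul]
    ring

lemma attain (u v : Fin n → ℝ) {α β : ℝ} (hα : α ^ 2 = u ⬝ᵥ u) (hβ : β ^ 2 = v ⬝ᵥ v)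
    (hα0 : 0 ≤ α) (hβ0 : 0 ≤ β) (hs : 0 < α * β + u ⬝ᵥ v) :
    ∃ w : Fin n → ℝ, w ⬝ᵥ w = 1 ∧ (u ⬝ᵥ w) * (w ⬝ᵥ v) = (α * β + u ⬝ᵥ v) / 2 := by
  have hcs := dot_cs u v
  have hαβ : 0 < α * β := by nlinarith [mul_nonneg hα0 hβ0]
  have hk : 0 < 2 * (α * β) * (α * β + u ⬝ᵥ v) := by
    have := mul_pos hαβ hs
    nlinarith
  set r := Real.sqrt (2 * (α * β) * (α * β + u ⬝ᵥ v)) with hrdef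
  have hr0 : 0 < r := Real.sqrt_pos.mpr hk
  have hr2 : r ^ 2 = 2 * (α * β) * (α * β + u ⬝ᵥ v) := Real.sq_sqrt hk.le
  have hrne : r ≠ 0 := ne_of_gt hr0
  have hvu : v ⬝ᵥ u = u ⬝ᵥ v := dotProduct_comm _ _
  have h3 : (β • u + α • v) ⬝ᵥ (β • u + α • v) = 2 * (α * β) * (α * β + u ⬝ᵥ v) := by
    simp only [dotProduct_add, add_dotProduct, dotProduct_smul, smul_dotProduct,
      smul_eq_mul, hvu]
    rw [← hα, ← hβ]
    ring
  have h1 : u ⬝ᵥ (r⁻¹ • (β • u + α • v)) = r⁻¹ * (α * (α * β + u ⬝ᵥ v)) := by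
    simp only [dotProduct_smul, dotProduct_add, smul_eq_mul]
    congr 1
    rw [← hα]
    ring
  have h2 : (r⁻¹ • (β • u + α • v)) ⬝ᵥ v = r⁻¹ * (β * (α * β + u ⬝ᵥ v)) := by
    simp only [smul_dotProduct, add_dotProduct, smul_eq_mul]
    congr 1
    rw [← hβ]
    ring
  refine ⟨r⁻¹ • (β • u + α • v), ?_, ?_⟩
  · have : (r⁻¹ • (β • u + α • v)) ⬝ᵥ (r⁻¹ • (β • u + α • v)) =
        r⁻¹ * (r⁻¹ * ((β • u + α • v) ⬝ᵥ (β • u + α • v))) := by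
      simp only [smul_dotProduct, dotProduct_smul, smul_eq_mul]
    rw [this, h3, ← hr2]
    field_simp
  · rw [h1, h2]
    have hSne : α * β + u ⬝ᵥ v ≠ 0 := ne_of_gt hs
    have expand : r⁻¹ * (α * (α * β + u ⬝ᵥ v)) * (r⁻¹ * (β * (α * β + u ⬝ᵥ v))) =
        α * β * (α * β + u ⬝ᵥ v) ^ 2 / r ^ 2 := by
      field_simp
    rw [expand, hr2, div_eq_div_iff (by positivity) (two_ne_zero' ℝ)]
    ring

end Stmt5Aux

open Stmt5Aux in
/-- For symmetric `Ḣ ⪯ H̄`, `Ĥ := (H̄+Ḣ)/2`, `H̃ := H̄−Ḣ` and `a, b ∈ ℝⁿ`,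
the set `{aᵀHb : H symmetric, Ḣ ⪯ H ⪯ H̄}` has least element `aᵀĤb − ½‖a‖_H̃‖b‖_H̃` and
greatest element `aᵀĤb + ½‖a‖_H̃‖b‖_H̃`. -/
theorem stmt_5 {n : ℕ} (Hlo Hhi : Matrix (Fin n) (Fin n) ℝ)
    (hHlo : Hlo.IsSymm) (hHhi : Hhi.IsSymm)
    (hle : (Hhi - Hlo).PosSemidef)
    (a b : Fin n → ℝ) :
    IsLeast {x : ℝ | ∃ H : Matrix (Fin n) (Fin n) ℝ, H.IsSymm ∧
        (H - Hlo).PosSemidef ∧ (Hhi - H).PosSemidef ∧ x = a ⬝ᵥ H.mulVec b}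
      (a ⬝ᵥ (((2 : ℝ)⁻¹ • (Hhi + Hlo)).mulVec b)
        - (1 / 2) * Real.sqrt (a ⬝ᵥ (Hhi - Hlo).mulVec a)
            * Real.sqrt (b ⬝ᵥ (Hhi - Hlo).mulVec b)) ∧
    IsGreatest {x : ℝ | ∃ H : Matrix (Fin n) (Fin n) ℝ, H.IsSymm ∧
        (H - Hlo).PosSemidef ∧ (Hhi - H).PosSemidef ∧ x = a ⬝ᵥ H.mulVec b}
      (a ⬝ᵥ (((2 : ℝ)⁻¹ • (Hhi + Hlo)).mulVec b)
        + (1 / 2) * Real.sqrt (a ⬝ᵥ (Hhi - Hlo).mulVec a)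
            * Real.sqrt (b ⬝ᵥ (Hhi - Hlo).mulVec b)) := by
  classical
  set R := hle.sqrt with hRdef
  have hRherm : R.IsHermitian := hle.posSemidef_sqrt.1
  have hRs : R.IsSymm := symm_of_herm hRherm
  have hRR : R * R = Hhi - Hlo := hle.sqrt_mul_self
  set u := R *ᵥ a with hudef
  set v := R *ᵥ b with hvdef
  set T : ℝ := a ⬝ᵥ (((2 : ℝ)⁻¹ • (Hhi + Hlo)).mulVec b) with hTdef
  set d : ℝ := u ⬝ᵥ v with hddef
  set α : ℝ := Real.sqrt (u ⬝ᵥ u) with hαdef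
  set β : ℝ := Real.sqrt (v ⬝ᵥ v) with hβdef
  have hduu : a ⬝ᵥ (Hhi - Hlo) *ᵥ a = u ⬝ᵥ u := by rw [← hRR, dot_RR hRs]
  have hdvv : b ⬝ᵥ (Hhi - Hlo) *ᵥ b = v ⬝ᵥ v := by rw [← hRR, dot_RR hRs]
  have hdab : a ⬝ᵥ (Hhi - Hlo) *ᵥ b = d := by rw [← hRR, dot_RR hRs]
  have hα0 : 0 ≤ α := Real.sqrt_nonneg _
  have hβ0 : 0 ≤ β := Real.sqrt_nonneg _
  have hα2 : α ^ 2 = u ⬝ᵥ u := Real.sq_sqrt (dot_self_nonneg u)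
  have hβ2 : β ^ 2 = v ⬝ᵥ v := Real.sq_sqrt (dot_self_nonneg v)
  have hdabs : |d| ≤ α * β := by
    have h := dot_cs u v
    rw [← hα2, ← hβ2] at h
    have := Real.abs_le_sqrt (by nlinarith : d ^ 2 ≤ (α * β) ^ 2)
    rwa [Real.sqrt_sq_eq_abs, abs_of_nonneg (mul_nonneg hα0 hβ0)] at this
  have hT2 : 2 * T = a ⬝ᵥ Hhi *ᵥ b + a ⬝ᵥ Hlo *ᵥ b := by
    simp only [hTdef, Matrix.smul_mulVec, dotProduct_smul, Matrix.add_mulVec,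
      dotProduct_add, smul_eq_mul]
    ring
  have hTlo : a ⬝ᵥ Hlo *ᵥ b = T - d / 2 := by
    have : a ⬝ᵥ Hhi *ᵥ b - a ⬝ᵥ Hlo *ᵥ b = d := by
      rw [← hdab, Matrix.sub_mulVec, dotProduct_sub]
    linarith
  -- the bound, valid for every element of the set
  have hbound : ∀ x ∈ {x : ℝ | ∃ H : Matrix (Fin n) (Fin n) ℝ, H.IsSymm ∧
      (H - Hlo).PosSemidef ∧ (Hhi - H).PosSemidef ∧ x = a ⬝ᵥ H.mulVec b},
      |x - T| ≤ (1 / 2) * α * β := by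
    rintro x ⟨H, _, hQ, hP, rfl⟩
    set p := a ⬝ᵥ (Hhi - H) *ᵥ a with hpdef
    set q := a ⬝ᵥ (H - Hlo) *ᵥ a with hqdef
    set p' := b ⬝ᵥ (Hhi - H) *ᵥ b with hp'def
    set q' := b ⬝ᵥ (H - Hlo) *ᵥ b with hq'def
    have hp : 0 ≤ p := psd_quad hP a
    have hq : 0 ≤ q := psd_quad hQ a
    have hp' : 0 ≤ p' := psd_quad hP b
    have hq' : 0 ≤ q' := psd_quad hQ b
    have hpq : p + q = u ⬝ᵥ u := by
      rw [← hduu, hpdef, hqdef]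
      simp only [Matrix.sub_mulVec, dotProduct_sub]
      ring
    have hpq' : p' + q' = v ⬝ᵥ v := by
      rw [← hdvv, hp'def, hq'def]
      simp only [Matrix.sub_mulVec, dotProduct_sub]
      ring
    have hQb : |a ⬝ᵥ (H - Hlo) *ᵥ b| ≤ Real.sqrt q * Real.sqrt q' := by
      have := Real.abs_le_sqrt (psd_cs hQ a b)
      rwa [Real.sqrt_mul hq] at this
    have hPb : |a ⬝ᵥ (Hhi - H) *ᵥ b| ≤ Real.sqrt p * Real.sqrt p' := by
      have := Real.abs_le_sqrt (psd_cs hP a b)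
      rwa [Real.sqrt_mul hp] at this
    have hsum : Real.sqrt q * Real.sqrt q' + Real.sqrt p * Real.sqrt p' ≤ α * β := by
      have := sqrt_cs hp hq hp' hq'
      rwa [hpq, hpq', ← hαdef, ← hβdef] at this
    have h2c : a ⬝ᵥ (H - Hlo) *ᵥ b - a ⬝ᵥ (Hhi - H) *ᵥ b = 2 * (a ⬝ᵥ H *ᵥ b - T) := by
      simp only [Matrix.sub_mulVec, dotProduct_sub]
      linarith [hT2]
    have habs : |2 * (a ⬝ᵥ H *ᵥ b - T)| ≤ α * β := by
      rw [← h2c]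
      calc |a ⬝ᵥ (H - Hlo) *ᵥ b - a ⬝ᵥ (Hhi - H) *ᵥ b|
          ≤ |a ⬝ᵥ (H - Hlo) *ᵥ b| + |a ⬝ᵥ (Hhi - H) *ᵥ b| := abs_sub _ _
        _ ≤ Real.sqrt q * Real.sqrt q' + Real.sqrt p * Real.sqrt p' := add_le_add hQb hPb
        _ ≤ α * β := hsum
    rw [abs_mul, abs_two] at habs
    have : |a ⬝ᵥ H *ᵥ b - T| ≤ α * β / 2 := by linarith
    linarith
  -- membership helper: a value achieving `T - d/2 + (u⬝w)(w⬝v)` for any unit `w`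
  have hmem : ∀ w : Fin n → ℝ, w ⬝ᵥ w = 1 →
      (T - d / 2 + (u ⬝ᵥ w) * (w ⬝ᵥ v)) ∈ {x : ℝ | ∃ H : Matrix (Fin n) (Fin n) ℝ, H.IsSymm ∧
        (H - Hlo).PosSemidef ∧ (Hhi - H).PosSemidef ∧ x = a ⬝ᵥ H.mulVec b} := by
    intro w hw
    obtain ⟨H, h1, h2, h3, h4⟩ := mem_w Hlo Hhi hHlo hle a b w hw
    exact ⟨H, h1, h2, h3, by rw [h4, hTlo, ← hRdef, ← hudef, ← hvdef]⟩
  have hmemlo : (T - d / 2) ∈ {x : ℝ | ∃ H : Matrix (Fin n) (Fin n) ℝ, H.IsSymm ∧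
      (H - Hlo).PosSemidef ∧ (Hhi - H).PosSemidef ∧ x = a ⬝ᵥ H.mulVec b} :=
    ⟨Hlo, hHlo, by rw [sub_self]; exact Matrix.PosSemidef.zero, hle, by rw [hTlo]⟩
  rw [hduu, hdvv, ← hαdef, ← hβdef]
  constructor
  · constructor
    · -- membership for the least element: target T - (1/2)αβ
      rcases eq_or_lt_of_le (by linarith [abs_le.mp hdabs] : (0:ℝ) ≤ α * β - d) with hs | hs
      · have hd : d = α * β := by linarith
        have := hmemlo
        rw [show T - d / 2 = T - 1/2 * α * β by rw [hd]; ring] at this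
        exact this
      · have hβ2' : β ^ 2 = (-v) ⬝ᵥ (-v) := by
          rw [hβ2]
          simp
        have hs' : 0 < α * β + u ⬝ᵥ (-v) := by
          rw [dotProduct_neg, ← hddef]
          linarith
        obtain ⟨w, hw, hval⟩ := attain u (-v) hα2 hβ2' hα0 hβ0 hs'
        have := hmem w hw
        have hveq : (u ⬝ᵥ w) * (w ⬝ᵥ v) = -((α * β + u ⬝ᵥ (-v)) / 2) := by
          rw [← hval, dotProduct_neg]
          ring
        rw [hveq, dotProduct_neg, ← hddef] at this
        have heq : T - d / 2 + -((α * β + -d) / 2) = T - 1/2 * α * β := by ring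
        rwa [heq] at this
    · intro x hx
      have := hbound x hx
      rcases abs_le.mp this with ⟨h1, _⟩
      linarith
  · constructor
    · -- membership for the greatest element: target T + (1/2)αβ
      rcases eq_or_lt_of_le (by linarith [abs_le.mp hdabs] : (0:ℝ) ≤ α * β + d) with hs | hs
      · have hd : d = -(α * β) := by linarith
        have := hmemlo
        rw [show T - d / 2 = T + 1/2 * α * β by rw [hd]; ring] at this
        exact this
      · have hs' : 0 < α * β + u ⬝ᵥ v := by rw [← hddef]; linarith
        obtain ⟨w, hw, hval⟩ := attain u v hα2 hβ2 hα0 hβ0 hs'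
        have := hmem w hw
        rw [hval, ← hddef] at this
        have heq : T - d / 2 + (α * β + d) / 2 = T + 1/2 * α * β := by ring
        rwa [heq] at this
    · intro x hx
      have := hbound x hx
      rcases abs_le.mp this with ⟨_, h2⟩
      linarith
end

section
/- Let J : ℝⁿ → ℝ be twice continuously differentiable with Hessian upper bound ∇²J ⪯ H̄, let K be a real symmetric positive definite n×n matrix and γ ∈ ℝ such that K − K(H̄ + γI)K is positive semidefinite. Then for every r ∈ ℝⁿ, writing θ := ∇J(r): J(r − Kθ) − J(r) ≤ −½ θᵀKθ − (γ/2)‖Kθ‖². -/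
open Matrix
open scoped RealInnerProductSpace

/-- 1D Taylor-type bound: if `f'' = g ≤ M` everywhere, then `f 1 - f 0 ≤ f' 0 + M/2`. -/
lemma aux_oneD {f f' g : ℝ → ℝ} {M : ℝ}
    (hf : ∀ t, HasDerivAt f (f' t) t)
    (hf' : ∀ t, HasDerivAt f' (g t) t) (hg : ∀ t, g t ≤ M) :
    f 1 - f 0 ≤ f' 0 + M / 2 := by
  set F : ℝ → ℝ := fun t => f t - f 0 - t * f' 0 - M * t ^ 2 / 2 with hFdef
  have hF : ∀ t, HasDerivAt F (f' t - f' 0 - M * t) t := by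
    intro t
    have h1 : HasDerivAt (fun t : ℝ => M * t ^ 2 / 2) (M * (2 * t ^ 1) / 2) t :=
      ((hasDerivAt_pow 2 t).const_mul M).div_const 2
    have h2 := (((hf t).sub_const (f 0)).sub ((hasDerivAt_id t).mul_const (f' 0))).sub h1
    exact h2.congr_deriv (by ring)
  have hG : ∀ t, HasDerivAt (fun t => f' t - f' 0 - M * t) (g t - M) t := by
    intro t
    have h1 : HasDerivAt (fun t : ℝ => M * t) (M * 1) t := (hasDerivAt_id t).const_mul M
    have h2 := ((hf' t).sub_const (f' 0)).sub h1
    exact h2.congr_deriv (by ring)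
  have hanti : Antitone (fun t => f' t - f' 0 - M * t) := by
    apply antitone_of_deriv_nonpos
    · exact fun t => (hG t).differentiableAt
    · intro t
      rw [(hG t).deriv]
      linarith [hg t]
  have hF'le : ∀ t ∈ Set.Ioo (0:ℝ) 1, deriv F t ≤ 0 := by
    intro t ht
    rw [(hF t).deriv]
    have := hanti (le_of_lt ht.1)
    simpa using this
  have hFanti : AntitoneOn F (Set.Icc 0 1) := by
    apply antitoneOn_of_deriv_nonpos (convex_Icc 0 1)
    · exact (Differentiable.continuous (fun t => (hF t).differentiableAt)).continuousOn
    · intro t _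
      exact (hF t).differentiableAt.differentiableWithinAt
    · intro t ht
      rw [interior_Icc] at ht
      exact hF'le t ht
  have := hFanti (Set.mem_Icc.2 ⟨le_refl 0, zero_le_one⟩) (Set.mem_Icc.2 ⟨zero_le_one, le_refl 1⟩) zero_le_one
  simp only [hFdef] at this
  nlinarith [this]

/-- With Hessian upper bound `∇²J ⪯ H̄`, `K` symmetric positive definite, and
`K − K(H̄ + γI)K ⪰ 0`, for every `r`, writing `θ := ∇J(r)`:
`J(r − Kθ) − J(r) ≤ −½θᵀKθ − (γ/2)‖Kθ‖²`. -/
theorem stmt_9 {n : ℕ} (J : EuclideanSpace ℝ (Fin n) → ℝ)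
    (Hhi : Matrix (Fin n) (Fin n) ℝ) (hHhi : Hhi.IsSymm)
    (hJ : ContDiff ℝ 2 J)
    (hhigh : ∀ z v : EuclideanSpace ℝ (Fin n),
      iteratedFDeriv ℝ 2 J z ![v, v] ≤ v ⬝ᵥ Hhi.mulVec v)
    (K : Matrix (Fin n) (Fin n) ℝ) (hK : K.PosDef) (γ : ℝ)
    (hgain : (K - K * (Hhi + γ • (1 : Matrix (Fin n) (Fin n) ℝ)) * K).PosSemidef)
    (r : EuclideanSpace ℝ (Fin n))
    (θ : EuclideanSpace ℝ (Fin n)) (hθ : θ = gradient J r) :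
    J (Sub.sub r (WithLp.toLp 2 (K.mulVec θ))) - J r
      ≤ -(1 / 2) * (θ ⬝ᵥ K.mulVec θ)
        - (γ / 2) * (K.mulVec θ ⬝ᵥ K.mulVec θ) := by
  classical
  set d : EuclideanSpace ℝ (Fin n) := -(WithLp.toLp 2 (K.mulVec θ)) with hd
  set x : ℝ → EuclideanSpace ℝ (Fin n) := fun t => r + t • d with hxdef
  have hdiff : Differentiable ℝ J := hJ.differentiable (by norm_num)
  have hDf : Differentiable ℝ (fderiv ℝ J) :=
    (hJ.fderiv_right (m := 1) (by norm_num)).differentiable (by norm_num)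
  have hx : ∀ t, HasDerivAt x d t := by
    intro t
    have := ((hasDerivAt_id t).smul_const d).const_add r
    exact this.congr_deriv (one_smul ℝ d)
  have hfd : ∀ t, HasDerivAt (fun t => J (x t)) (fderiv ℝ J (x t) d) t := by
    intro t
    exact (hdiff (x t)).hasFDerivAt.comp_hasDerivAt t (hx t)
  have h2 : ∀ t, HasDerivAt (fun t => fderiv ℝ J (x t) d)
      (fderiv ℝ (fderiv ℝ J) (x t) d d) t := by
    intro t
    have h := (hDf (x t)).hasFDerivAt.comp_hasDerivAt t (hx t)
    have := h.clm_apply (hasDerivAt_const t d)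
    simpa using this
  have hgM : ∀ t, fderiv ℝ (fderiv ℝ J) (x t) d d ≤ d ⬝ᵥ Hhi.mulVec d := by
    intro t
    have := hhigh (x t) d
    rwa [iteratedFDeriv_two_apply, Matrix.cons_val_zero, Matrix.cons_val_one, Matrix.cons_val_zero] at this
    -- might need to simp ![d,d]
  have key := aux_oneD hfd h2 hgM
  have hx0 : x 0 = r := by simp [hxdef]
  have hx1 : x 1 = r + d := by simp [hxdef]
  rw [hx0, hx1] at key
  have hsub : Sub.sub r (WithLp.toLp 2 (K.mulVec θ)) = r + d := by
    rw [hd]; exact sub_eq_add_neg r _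
  rw [hsub]
  have hgrad : fderiv ℝ J r d = θ ⬝ᵥ d := by
    have h1 : (inner ℝ (gradient J r) d : ℝ) = fderiv ℝ J r d := by
      unfold gradient
      exact InnerProductSpace.toDual_symm_apply
    rw [← h1, ← hθ]
    simp [PiLp.inner_apply, RCLike.inner_apply, dotProduct, mul_comm]
  rw [hgrad] at key
  -- gain condition
  have hq := hgain.dotProduct_mulVec_nonneg θ
  have hexp : star θ ⬝ᵥ (K - K * (Hhi + γ • (1 : Matrix (Fin n) (Fin n) ℝ)) * K).mulVec θ
      = θ ⬝ᵥ K.mulVec θ - (K.mulVec θ ⬝ᵥ Hhi.mulVec (K.mulVec θ)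
          + γ * (K.mulVec θ ⬝ᵥ K.mulVec θ)) := by
    have hKsymm : Kᵀ = K := hK.1
    rw [star_trivial, Matrix.sub_mulVec, dotProduct_sub]
    congr 1
    rw [← Matrix.mulVec_mulVec, ← Matrix.mulVec_mulVec, Matrix.dotProduct_mulVec,
      ← Matrix.mulVec_transpose, hKsymm, Matrix.add_mulVec, Matrix.smul_mulVec,
      Matrix.one_mulVec, dotProduct_add, dotProduct_smul, smul_eq_mul]
  rw [hexp] at hq
  have hdot1 : θ ⬝ᵥ d = -(θ ⬝ᵥ K.mulVec θ) := by
    rw [hd]; exact dotProduct_neg θ _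
  have hdot2 : d ⬝ᵥ Hhi.mulVec d = K.mulVec θ ⬝ᵥ Hhi.mulVec (K.mulVec θ) := by
    rw [hd, WithLp.ofLp_neg, WithLp.ofLp_toLp]
    rw [show Hhi.mulVec (-(K.mulVec θ)) = -(Hhi.mulVec (K.mulVec θ)) from Matrix.mulVec_neg _ Hhi]
    rw [neg_dotProduct, dotProduct_neg, neg_neg]
  rw [hdot1, hdot2] at key
  linarith
end

section
/- Let J : ℝⁿ → ℝ be twice continuously differentiable with Hessian upper bound ∇²J ⪯ H̄, let K be a real symmetric positive definite n×n matrix and γ ∈ ℝ such that K − K(H̄ + γI)K is positive semidefinite. Fix r, θ̂ ∈ ℝⁿ with θ̂ᵀKθ̂ > 0, let θ := ∇J(r) and θ̃ := θ̂ − θ, and let α ∈ ℝ satisfy 0 ≤ α and α ≤ 1 − (θ̃ᵀKθ̂)/(θ̂ᵀKθ̂). Then J(r − αKθ̂) − J(r) ≤ −½ α² θ̂ᵀKθ̂ − (γ/2) α² ‖Kθ̂‖². -/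
open Matrix
open scoped RealInnerProductSpace

lemma taylor2_upper {E : Type*} [NormedAddCommGroup E] [NormedSpace ℝ E]
    (f : E → ℝ) (hf : ContDiff ℝ 2 f) (r d : E) (M : ℝ)
    (hM : ∀ z, iteratedFDeriv ℝ 2 f z ![d, d] ≤ M) :
    f (r + d) ≤ f r + fderiv ℝ f r d + M / 2 := by
  set c : ℝ → E := fun t => r + t • d with hc
  have hcd : ∀ t : ℝ, HasDerivAt c d t := by
    intro t
    simpa [c] using ((hasDerivAt_id t).smul_const d).const_add r
  have hf1 : Differentiable ℝ f := hf.differentiable (by norm_num)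
  have hf2 : Differentiable ℝ (fderiv ℝ f) := by
    exact (hf.fderiv_right (m := 1) (by norm_num)).differentiable (by norm_num)
  set g1 : ℝ → ℝ := fun t => fderiv ℝ f (c t) d with hg1
  set g2 : ℝ → ℝ := fun t => fderiv ℝ (fderiv ℝ f) (c t) d d with hg2
  have hdg : ∀ t : ℝ, HasDerivAt (fun t => f (c t)) (g1 t) t := fun t =>
    (hf1 (c t)).hasFDerivAt.comp_hasDerivAt t (hcd t)
  have hdg1 : ∀ t : ℝ, HasDerivAt g1 (g2 t) t := by
    intro t
    have h1 : HasDerivAt (fun t => fderiv ℝ f (c t)) (fderiv ℝ (fderiv ℝ f) (c t) d) t :=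
      (hf2 (c t)).hasFDerivAt.comp_hasDerivAt t (hcd t)
    simpa using h1.clm_apply (hasDerivAt_const t d)
  have hg2M : ∀ t : ℝ, g2 t ≤ M := by
    intro t
    have := hM (c t)
    rwa [iteratedFDeriv_two_apply] at this
  set B : ℝ := fderiv ℝ f r d with hB
  set φ : ℝ → ℝ := fun t => f (c t) - f (c 0) - t * B - M / 2 * t ^ 2 with hφ
  set φ' : ℝ → ℝ := fun t => g1 t - B - M * t with hφ'
  have hdφ : ∀ t : ℝ, HasDerivAt φ (φ' t) t := by
    intro t
    have := ((((hdg t).sub_const (f (c 0))).sub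
      ((hasDerivAt_id t).mul_const B)).sub
      (((hasDerivAt_pow 2 t).const_mul (M / 2))))
    refine this.congr_deriv ?_
    simp [φ']
    ring
  have hdφ' : ∀ t : ℝ, HasDerivAt φ' (g2 t - M) t := by
    intro t
    have h := ((hdg1 t).sub_const B).sub ((hasDerivAt_id t).const_mul M)
    simp only [mul_one, id] at h
    exact h
  have hanti' : Antitone φ' :=
    antitone_of_hasDerivAt_nonpos hdφ' (fun t => by simpa using sub_nonpos.mpr (hg2M t))
  have hφ'0 : φ' 0 = 0 := by simp [φ', g1, c, B]
  have hanti : AntitoneOn φ (Set.Icc 0 1) := by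
    apply antitoneOn_of_hasDerivWithinAt_nonpos (convex_Icc 0 1)
      (fun t _ => (hdφ t).continuousAt.continuousWithinAt)
      (fun t ht => (hdφ t).hasDerivWithinAt)
    intro t ht
    rw [interior_Icc] at ht
    have := hanti' (le_of_lt ht.1)
    rw [hφ'0] at this
    exact this
  have h01 : φ 1 ≤ φ 0 := hanti (by norm_num) (by norm_num) zero_le_one
  have hφ0 : φ 0 = 0 := by simp [φ]
  have hc0 : c 0 = r := by simp [c]
  have hc1 : c 1 = r + d := by simp [c]
  rw [hφ0] at h01
  have := h01
  simp only [φ, hc0, hc1, one_pow, mul_one, one_mul] at this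
  linarith

open Matrix
open scoped RealInnerProductSpace

/-- core of the paper's Corollary 2: with `∇²J ⪯ H̄`, gain condition
`K − K(H̄+γI)K ⪰ 0`, `θ̂ᵀKθ̂ > 0`, `θ := ∇J(r)`, `θ̃ := θ̂ − θ`, and step-size
`0 ≤ α ≤ 1 − θ̃ᵀKθ̂/θ̂ᵀKθ̂`: `J(r − αKθ̂) − J(r) ≤ −½α²θ̂ᵀKθ̂ − (γ/2)α²‖Kθ̂‖²`. -/
theorem stmt_10 {n : ℕ} (J : EuclideanSpace ℝ (Fin n) → ℝ)
    (Hhi : Matrix (Fin n) (Fin n) ℝ) (hHhi : Hhi.IsSymm)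
    (hJ : ContDiff ℝ 2 J)
    (hhigh : ∀ z v : EuclideanSpace ℝ (Fin n),
      iteratedFDeriv ℝ 2 J z ![v, v] ≤ v ⬝ᵥ Hhi.mulVec v)
    (K : Matrix (Fin n) (Fin n) ℝ) (hK : K.PosDef) (γ : ℝ)
    (hgain : (K - K * (Hhi + γ • (1 : Matrix (Fin n) (Fin n) ℝ)) * K).PosSemidef)
    (r θhat : EuclideanSpace ℝ (Fin n))
    (hpos : 0 < θhat ⬝ᵥ K.mulVec θhat)
    (θ θtil : EuclideanSpace ℝ (Fin n))
    (hθ : θ = gradient J r) (hθtil : θtil = θhat - θ)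
    (α : ℝ) (hα0 : 0 ≤ α)
    (hα1 : α ≤ 1 - (θtil ⬝ᵥ K.mulVec θhat) / (θhat ⬝ᵥ K.mulVec θhat)) :
    J (Sub.sub r (WithLp.toLp 2 (α • K.mulVec θhat))) - J r
      ≤ -(1 / 2) * α ^ 2 * (θhat ⬝ᵥ K.mulVec θhat)
        - (γ / 2) * α ^ 2 * (K.mulVec θhat ⬝ᵥ K.mulVec θhat) := by
  classical
  set u : Fin n → ℝ := K.mulVec θhat with hu
  set d : EuclideanSpace ℝ (Fin n) := -(α • (WithLp.toLp 2 u : EuclideanSpace ℝ (Fin n))) with hd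
  have hsub : (Sub.sub r (WithLp.toLp 2 (α • K.mulVec θhat)) : EuclideanSpace ℝ (Fin n)) = r + d := by
    rw [hd, hu]; exact sub_eq_add_neg r _
  -- Taylor bound
  have htay := taylor2_upper J hJ r d ((d : Fin n → ℝ) ⬝ᵥ Hhi.mulVec d) (fun z => hhigh z d)
  -- gradient / fderiv
  have hgrad : fderiv ℝ J r d = θ ⬝ᵥ (d : Fin n → ℝ) := by
    have h1 : @inner ℝ _ _ (gradient J r) d = fderiv ℝ J r d := by
      rw [gradient]; exact InnerProductSpace.toDual_symm_apply
    rw [← h1, ← hθ]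
    simp [PiLp.inner_apply, RCLike.inner_apply, dotProduct, mul_comm]
  -- abbreviations
  set S : ℝ := θhat ⬝ᵥ u with hS
  set e : ℝ := θtil ⬝ᵥ u with he
  have hT : θ ⬝ᵥ u = S - e := by
    have : (θtil : Fin n → ℝ) = θhat - θ := by rw [hθtil]; rfl
    rw [he, this, sub_dotProduct, hS]; ring
  have hθd : θ ⬝ᵥ (d : Fin n → ℝ) = -α * (S - e) := by
    have hdc : (d : Fin n → ℝ) = -(α • u) := rfl
    rw [hdc, dotProduct_neg, dotProduct_smul, smul_eq_mul, hT]; ring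
  have hMval : (d : Fin n → ℝ) ⬝ᵥ Hhi.mulVec d = α ^ 2 * (u ⬝ᵥ Hhi.mulVec u) := by
    have hdc : (d : Fin n → ℝ) = -(α • u) := rfl
    rw [hdc]
    simp only [Matrix.mulVec_neg, Matrix.mulVec_smul, neg_dotProduct,
      dotProduct_neg, smul_dotProduct, dotProduct_smul, smul_eq_mul,
      neg_neg]
    ring
  -- gain condition
  have hKsymm : Kᵀ = K := by simpa [Matrix.IsSymm] using hK.1
  have hgain2 : u ⬝ᵥ Hhi.mulVec u + γ * (u ⬝ᵥ u) ≤ S := by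
    have h0 := hgain.re_dotProduct_nonneg θhat
    simp only [star_trivial, RCLike.re_to_real] at h0
    have hvm : θhat ᵥ* K = u := by rw [← Matrix.mulVec_transpose, hKsymm]
    have hexp : θhat ⬝ᵥ (K - K * (Hhi + γ • (1 : Matrix (Fin n) (Fin n) ℝ)) * K) *ᵥ θhat
        = S - (u ⬝ᵥ Hhi *ᵥ u + γ * (u ⬝ᵥ u)) := by
      rw [Matrix.sub_mulVec, dotProduct_sub, Matrix.mul_assoc,
        ← Matrix.mulVec_mulVec, ← Matrix.mulVec_mulVec, Matrix.dotProduct_mulVec,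
        Matrix.dotProduct_mulVec, hvm, Matrix.add_mulVec, dotProduct_add,
        Matrix.smul_mulVec, Matrix.one_mulVec, dotProduct_smul, smul_eq_mul,
        dotProduct_comm u θhat, hS]
    rw [hexp] at h0
    linarith
  -- step-size
  have hstep : α * S ≤ S - e := by
    have := mul_le_mul_of_nonneg_right hα1 hpos.le
    rw [sub_mul, one_mul, div_mul_cancel₀ _ (ne_of_gt hpos)] at this
    linarith
  rw [hsub]
  rw [hgrad, hθd, hMval] at htay
  nlinarith [mul_le_mul_of_nonneg_left hstep hα0, sq_nonneg α]
end
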